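/- Let B be a finite bi-skew brace. Then for every prime p dividing |B|, there exists a subbrace S of B with |S| = p (Cauchy's theorem for bi-skew braces). -/

import Mathlib

class SkewBrace (B : Type*) extends Group B, AddGroup B where
  one_eq_zero : (1 : B) = 0
  left_compat : ∀ a b c : B, a * (b + c) = a * b - a + a * c

class BiSkewBrace (B : Type*) extends SkewBrace B where
  op_compat : ∀ a b c : B, a + b * c = (a + b) * a⁻¹ * (a + c)

namespace BiSkewAux

variable {B : Type*} [BiSkewBrace B]

/-- The lambda map of the skew brace. -/
def lam (a x : B) : B := -a + a * x

lemma mul_eq_add_lam (a x : B) : a * x = a + lam a x := by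
  simp [lam, add_neg_cancel_left]

lemma lam_add (a x y : B) : lam a (x + y) = lam a x + lam a y := by
  simp only [lam, SkewBrace.left_compat, sub_eq_add_neg, add_assoc]

lemma lam_zero (a : B) : lam a 0 = 0 := by
  rw [lam, ← SkewBrace.one_eq_zero, mul_one, neg_add_cancel]
  exact SkewBrace.one_eq_zero.symm

lemma lam_one (a : B) : lam a 1 = 1 := by
  rw [SkewBrace.one_eq_zero]; exact lam_zero a

/-- The inverse of the lambda map. -/
def rho (a x : B) : B := a⁻¹ * (a + x)

lemma rho_lam (a x : B) : rho a (lam a x) = x := by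
  simp [rho, lam, add_neg_cancel_left]

lemma lam_rho (a x : B) : lam a (rho a x) = x := by
  simp [rho, lam, mul_inv_cancel_left, neg_add_cancel_left]

lemma rho_mul (a x y : B) : rho a (x * y) = rho a x * rho a y := by
  simp only [rho, BiSkewBrace.op_compat a x y, mul_assoc]

lemma lam_mul (a x y : B) : lam a (x * y) = lam a x * lam a y := by
  have h : rho a (lam a x * lam a y) = x * y := by rw [rho_mul, rho_lam, rho_lam]
  calc lam a (x * y) = lam a (rho a (lam a x * lam a y)) := by rw [h]
    _ = lam a x * lam a y := lam_rho a _

lemma lam_inv (a x : B) : lam a x⁻¹ = (lam a x)⁻¹ := by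
  have : lam a x⁻¹ * lam a x = 1 := by rw [← lam_mul, inv_mul_cancel, lam_one]
  exact eq_inv_of_mul_eq_one_left this

lemma lam_neg (a x : B) : lam a (-x) = -(lam a x) := by
  have : lam a (-x) + lam a x = 0 := by rw [← lam_add, neg_add_cancel, lam_zero]
  exact eq_neg_of_add_eq_zero_left this

lemma lam_lam (a b x : B) : lam (a * b) x = lam a (lam b x) := by
  have h1 : (a * b) * x = (a + lam a b) + lam (a * b) x := by
    rw [← mul_eq_add_lam a b, ← mul_eq_add_lam]
  have h2 : a * (b * x) = (a + lam a b) + lam a (lam b x) := by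
    rw [mul_eq_add_lam a (b * x), mul_eq_add_lam b x, lam_add, ← add_assoc]
  have := h1.symm.trans ((mul_assoc a b x).trans h2)
  exact add_left_cancel this

lemma lam_nsmul (a : B) (n : ℕ) (x : B) : lam a (n • x) = n • lam a x := by
  induction n with
  | zero => simp [lam_zero]
  | succ k ih => rw [succ_nsmul, lam_add, ih, succ_nsmul]

lemma pow_eq_nsmul {c : B} (hc : c * c = c + c) : ∀ n : ℕ, c ^ n = n • c := by
  have hlc : lam c c = c := by
    have := mul_eq_add_lam c c
    rw [hc] at this
    exact (add_left_cancel this).symm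
  intro n
  induction n with
  | zero => rw [pow_zero, zero_nsmul, SkewBrace.one_eq_zero]
  | succ k ih =>
      rw [pow_succ', ih, mul_eq_add_lam, lam_nsmul, hlc, succ_nsmul']

lemma zpow_eq_zsmul {c : B} (hc : c * c = c + c) {m : ℕ} (hm : m ≠ 0)
    (h1 : c ^ m = 1) (k : ℤ) : c ^ k = k • c := by
  have hn := pow_eq_nsmul hc
  have h0 : m • c = (0 : B) := by rw [← hn, h1, SkewBrace.one_eq_zero]
  have hmz : (m : ℤ) ≠ 0 := Int.natCast_ne_zero.mpr hm
  have hksplit : k = k / m * m + k % m := (Int.ediv_mul_add_emod k m).symm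
  have hr0 : 0 ≤ k % (m : ℤ) := Int.emod_nonneg k hmz
  set r : ℕ := (k % (m : ℤ)).toNat with hrdef
  have hrcast : ((r : ℤ)) = k % (m : ℤ) := Int.toNat_of_nonneg hr0
  have hone : c ^ (k / (m : ℤ) * (m : ℤ)) = 1 := by
    rw [mul_comm, zpow_mul, zpow_natCast, h1, one_zpow]
  have hzp : c ^ k = c ^ r := by
    conv_lhs => rw [hksplit]
    rw [zpow_add, hone, one_mul, ← hrcast, zpow_natCast]
  have hzs : k • c = r • c := by
    conv_lhs => rw [hksplit]
    rw [← hrcast, add_zsmul, mul_zsmul, natCast_zsmul, h0, smul_zero, zero_add,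
      natCast_zsmul]
  rw [hzp, hzs, hn]

/-- A multiplicative subgroup closed under addition and negation
is a bi-skew brace. -/
def subBiSkew (H : Subgroup B) (hadd : ∀ x ∈ H, ∀ y ∈ H, x + y ∈ H)
    (hneg : ∀ x ∈ H, -x ∈ H) : BiSkewBrace ↥H := by
  have h0 : (0 : B) ∈ H := by rw [← SkewBrace.one_eq_zero]; exact H.one_mem
  have hns : ∀ n : ℕ, ∀ x ∈ H, n • x ∈ H := by
    intro n x hx
    induction n with
    | zero => simpa using h0
    | succ k ih => rw [succ_nsmul]; exact hadd _ ih _ hx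
  have hzs : ∀ n : ℤ, ∀ x ∈ H, n • x ∈ H := by
    intro n x hx
    cases n with
    | ofNat k => simpa using hns k x hx
    | negSucc k => rw [negSucc_zsmul]; exact hneg _ (hns _ x hx)
  letI : Zero ↥H := ⟨⟨0, h0⟩⟩
  letI : Add ↥H := ⟨fun x y => ⟨x + y, hadd _ x.2 _ y.2⟩⟩
  letI : Neg ↥H := ⟨fun x => ⟨-x, hneg _ x.2⟩⟩
  letI : Sub ↥H := ⟨fun x y => ⟨(x : B) - y, by
    rw [sub_eq_add_neg]; exact hadd _ x.2 _ (hneg _ y.2)⟩⟩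
  letI : SMul ℕ ↥H := ⟨fun n x => ⟨n • (x : B), hns n _ x.2⟩⟩
  letI : SMul ℤ ↥H := ⟨fun n x => ⟨n • (x : B), hzs n _ x.2⟩⟩
  letI ag : AddGroup ↥H :=
    Function.Injective.addGroup (fun x : ↥H => (x : B)) Subtype.val_injective
      rfl (fun _ _ => rfl) (fun _ => rfl) (fun _ _ => rfl) (fun _ _ => rfl)
      (fun _ _ => rfl)
  exact
    { (inferInstance : Group ↥H), ag with
      one_eq_zero := Subtype.ext SkewBrace.one_eq_zero
      left_compat := fun a b c => Subtype.ext (SkewBrace.left_compat (a : B) b c)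
      op_compat := fun a b c => Subtype.ext (BiSkewBrace.op_compat (a : B) b c) }

universe u

lemma key : ∀ (n : ℕ) (B : Type u) [BiSkewBrace B] [Fintype B], Nat.card B = n →
    ∀ p : ℕ, p.Prime → p ∣ n → ∃ c : B, orderOf c = p ∧ c * c = c + c := by
  intro n
  induction n using Nat.strong_induction_on with
  | _ n ih =>
    intro B _ _ hn p hp hdvd
    haveI : Fact p.Prime := ⟨hp⟩
    have hdvdB : p ∣ Nat.card B := hn ▸ hdvd
    obtain ⟨P⟩ : Nonempty (Sylow p B) := inferInstance
    letI act : MulAction ↥(P : Subgroup B) B :=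
      { smul := fun a x => lam (a : B) x
        one_smul := fun x => by
          show lam ((1 : ↥(P : Subgroup B)) : B) x = x
          rw [Subgroup.coe_one, SkewBrace.one_eq_zero, lam]
          rw [← SkewBrace.one_eq_zero, one_mul, SkewBrace.one_eq_zero,
            neg_zero, zero_add]
        mul_smul := fun a b x => lam_lam (a : B) b x }
    have hsmul : ∀ (a : ↥(P : Subgroup B)) (x : B), a • x = lam (a : B) x :=
      fun _ _ => rfl
    have hmod := P.isPGroup'.card_modEq_card_fixedPoints B
    have hFdvd : p ∣ Nat.card (MulAction.fixedPoints ↥(P : Subgroup B) B) :=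
      Nat.modEq_zero_iff_dvd.mp
        (hmod.symm.trans (Nat.modEq_zero_iff_dvd.mpr hdvdB))
    by_cases hF : ∀ x : B, x ∈ MulAction.fixedPoints ↥(P : Subgroup B) B
    · -- every lambda from P is the identity; take an element of order p in P
      have hPcard : p ∣ Nat.card ↥(P : Subgroup B) := by
        rw [Sylow.card_eq_multiplicity]
        exact dvd_pow_self p
          (hp.factorization_pos_of_dvd (Nat.card_pos.ne') hdvdB).ne'
      letI : Fintype ↥(P : Subgroup B) := Fintype.ofFinite _
      rw [Nat.card_eq_fintype_card] at hPcard
      obtain ⟨a, ha⟩ := exists_prime_orderOf_dvd_card p hPcard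
      refine ⟨(a : B), ?_, ?_⟩
      · exact (orderOf_injective (P : Subgroup B).subtype
          (P : Subgroup B).subtype_injective a).trans ha
      · have hfix := (MulAction.mem_fixedPoints.mp (hF (a : B))) a
        rw [hsmul] at hfix
        rw [mul_eq_add_lam, hfix]
    · -- recurse into the fixed-point subbrace
      classical
      push_neg at hF
      obtain ⟨x₀, hx₀⟩ := hF
      set S : Subgroup B :=
        { carrier := MulAction.fixedPoints ↥(P : Subgroup B) B
          one_mem' := by
            intro a
            rw [hsmul]; exact lam_one _
          mul_mem' := by
            intro x y hx hy a
            rw [hsmul, lam_mul, ← hsmul a x, ← hsmul a y, hx a, hy a]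
          inv_mem' := by
            intro x hx a
            rw [hsmul, lam_inv, ← hsmul a x, hx a] } with hSdef
      have hadd : ∀ x ∈ S, ∀ y ∈ S, x + y ∈ S := by
        intro x hx y hy a
        rw [hsmul, lam_add, ← hsmul a x, ← hsmul a y, hx a, hy a]
      have hneg : ∀ x ∈ S, -x ∈ S := by
        intro x hx a
        rw [hsmul, lam_neg, ← hsmul a x, hx a]
      letI : BiSkewBrace ↥S := subBiSkew S hadd hneg
      letI : Fintype ↥S := Fintype.ofFinite _
      have hcardS : Nat.card ↥S < n := by
        rw [← hn]
        exact Finite.card_subtype_lt (x := x₀) hx₀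
      have hdvdS : p ∣ Nat.card ↥S := hFdvd
      obtain ⟨c, hc1, hc2⟩ := ih _ hcardS ↥S rfl p hp hdvdS
      refine ⟨(c : B), ?_, ?_⟩
      · exact (orderOf_injective S.subtype S.subtype_injective c).trans hc1
      · exact congrArg Subtype.val hc2

end BiSkewAux

open BiSkewAux in
theorem biSkew_cauchy {B : Type*} [BiSkewBrace B] [Fintype B] :
    ∀ p : ℕ, p.Prime → p ∣ Nat.card B →
      ∃ (A : AddSubgroup B) (M : Subgroup B),
        (A : Set B) = (M : Set B) ∧ Nat.card A = p := by
  intro p hp hdvd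
  obtain ⟨c, hc1, hc2⟩ := key (Nat.card B) B rfl p hp hdvd
  have hcp : c ^ p = 1 := by rw [← hc1]; exact pow_orderOf_eq_one c
  have hp0 : p ≠ 0 := hp.ne_zero
  have hzz : ∀ k : ℤ, c ^ k = k • c := zpow_eq_zsmul hc2 hp0 hcp
  have hpc : p • c = 0 := by
    rw [← pow_eq_nsmul hc2, hcp, SkewBrace.one_eq_zero]
  have haddord : addOrderOf c = p := by
    have hdvd' : addOrderOf c ∣ p := addOrderOf_dvd_of_nsmul_eq_zero hpc
    rcases (Nat.Prime.eq_one_or_self_of_dvd hp _ hdvd') with h1 | h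
    · exfalso
      have hc0 : c = 0 := AddMonoid.addOrderOf_eq_one_iff.mp h1
      have hc01 : c = 1 := by rw [hc0, SkewBrace.one_eq_zero]
      rw [hc01, orderOf_one] at hc1
      exact hp.ne_one hc1.symm
    · exact h
  refine ⟨AddSubgroup.zmultiples c, Subgroup.zpowers c, ?_, ?_⟩
  · ext x
    simp only [SetLike.mem_coe, AddSubgroup.mem_zmultiples_iff,
      Subgroup.mem_zpowers_iff]
    constructor
    · rintro ⟨k, rfl⟩; exact ⟨k, hzz k⟩
    · rintro ⟨k, rfl⟩; exact ⟨k, (hzz k).symm⟩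
  · rw [Nat.card_zmultiples, haddord]
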